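/- In a finite MDP, if the initial distribution d0 is not sure winning for eventually synchronizing in T (i.e., there is no k ≥ 0 with Supp(d0) ⊆ Pre^k(T)), then for every strategy σ and every i ≥ 0, the probability mass in T at step i satisfies M^σ_i(T) ≤ 1 − α0·α^i, where α is the smallest positive transition probability and α0 the smallest positive probability in d0. -/

import Mathlib

open scoped BigOperators
open Classical Filter

/-- A finite Markov decision process with real transition probabilities. -/
structure MDP (Q A : Type) [Fintype Q] [Fintype A] where
  δ : Q → A → Q → ℝ
  δ_nonneg : ∀ q a q', 0 ≤ δ q a q'
  δ_sum : ∀ q a, ∑ q', δ q a q' = 1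

namespace MDP

variable {Q A : Type} [Fintype Q] [Fintype A]

/-- `d` is a probability distribution. -/
def IsDist (d : Q → ℝ) : Prop := (∀ q, 0 ≤ d q) ∧ ∑ q, d q = 1

/-- A (randomized, history-dependent) strategy maps a history (list of past
state-action pairs) and the current state to a distribution over actions. -/
def IsStrategy (σ : List (Q × A) → Q → A → ℝ) : Prop :=
  (∀ h q a, 0 ≤ σ h q a) ∧ ∀ h q, ∑ a, σ h q a = 1

/-- The probability of the finite path `qs` (with actions `as`) of length `i`,
under strategy `σ` from initial distribution `d0`. -/
noncomputable def pathProb (M : MDP Q A) (σ : List (Q × A) → Q → A → ℝ)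
    (d0 : Q → ℝ) (i : ℕ) (qs : Fin (i + 1) → Q) (as : Fin i → A) : ℝ :=
  d0 (qs 0) * ∏ j : Fin i,
    (σ (List.ofFn (fun k : Fin j.val =>
          (qs ⟨k.val, by have := k.isLt; have := j.isLt; omega⟩,
           as ⟨k.val, by have := k.isLt; have := j.isLt; omega⟩)))
        (qs j.castSucc) (as j))
      * M.δ (qs j.castSucc) (as j) (qs j.succ)

/-- The distribution over states after `i` steps (`M^σ_i`). -/
noncomputable def stepDist (M : MDP Q A) (σ : List (Q × A) → Q → A → ℝ)
    (d0 : Q → ℝ) (i : ℕ) (q : Q) : ℝ :=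
  ∑ qs : Fin (i + 1) → Q, ∑ as : Fin i → A,
    if qs (Fin.last i) = q then M.pathProb σ d0 i qs as else 0

/-- The probability mass that a (sub)distribution assigns to a set `T`. -/
noncomputable def mass (d : Q → ℝ) (T : Set Q) : ℝ := ∑ q, T.indicator d q

/-- The support of a (sub)distribution. -/
def supp {α : Type} (d : α → ℝ) : Set α := {q | 0 < d q}

/-- One-step sure predecessors of `Y`. -/
def Pre (M : MDP Q A) (Y : Set Q) : Set Q :=
  {q | ∃ a, ∀ q', 0 < M.δ q a q' → q' ∈ Y}

/-- Probability of reaching `T` within `i` steps. -/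
noncomputable def reachProb (M : MDP Q A) (σ : List (Q × A) → Q → A → ℝ)
    (d0 : Q → ℝ) (T : Set Q) (i : ℕ) : ℝ :=
  ∑ qs : Fin (i + 1) → Q, ∑ as : Fin i → A,
    if ∃ j, qs j ∈ T then M.pathProb σ d0 i qs as else 0

/-- `d0` is almost-sure winning for the reachability objective `◇T`:
some strategy reaches `T` with probability one. -/
def ASReach (M : MDP Q A) (d0 : Q → ℝ) (T : Set Q) : Prop :=
  ∃ σ, IsStrategy σ ∧ (⨆ i : ℕ, M.reachProb σ d0 T i) = 1

/-- `d0` is limit-sure eventually synchronizing in `T`. -/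
def LimitSureEventually (M : MDP Q A) (d0 : Q → ℝ) (T : Set Q) : Prop :=
  ∀ ε > (0 : ℝ), ∃ σ, IsStrategy σ ∧ ∃ i, 1 - ε ≤ mass (M.stepDist σ d0 i) T

/-- `d0` is almost-sure weakly synchronizing in `T`. -/
def ASWeakly (M : MDP Q A) (d0 : Q → ℝ) (T : Set Q) : Prop :=
  ∃ σ, IsStrategy σ ∧ ∀ ε > (0 : ℝ), {i : ℕ | 1 - ε ≤ mass (M.stepDist σ d0 i) T}.Infinite

/-- `d0` is almost-sure strongly synchronizing in `T`. -/
def ASStrongly (M : MDP Q A) (d0 : Q → ℝ) (T : Set Q) : Prop :=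
  ∃ σ, IsStrategy σ ∧ ∀ ε > (0 : ℝ), ∃ N, ∀ i ≥ N, 1 - ε ≤ mass (M.stepDist σ d0 i) T

/-- The uniform distribution on a set `S`. -/
noncomputable def uniformOn (S : Set Q) : Q → ℝ :=
  fun q => if q ∈ S then 1 / (S.ncard : ℝ) else 0

/-- The uniform strategy, playing all actions uniformly at random. -/
noncomputable def uniformStrategy (Q A : Type) [Fintype A] :
    List (Q × A) → Q → A → ℝ :=
  fun _ _ _ => 1 / (Fintype.card A : ℝ)

/-- Action `a` is allowed in `q` w.r.t. `S` if all its successors stay in `S`. -/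
def Allowed (M : MDP Q A) (S : Set Q) (q : Q) (a : A) : Prop :=
  ∀ q', 0 < M.δ q a q' → q' ∈ S

/-- Edge relation within `S` given the allowed actions. -/
def ECEdge (M : MDP Q A) (S : Set Q) (q q' : Q) : Prop :=
  q ∈ S ∧ q' ∈ S ∧ ∃ a, M.Allowed S q a ∧ 0 < M.δ q a q'

/-- `S` is an end-component: closed and strongly connected via allowed actions. -/
def IsEC (M : MDP Q A) (S : Set Q) : Prop :=
  (∀ q ∈ S, ∃ a, M.Allowed S q a) ∧
  ∀ q ∈ S, ∀ q' ∈ S, Relation.ReflTransGen (M.ECEdge S) q q'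

/-- The union of all end-components. -/
def ECUnion (M : MDP Q A) : Set Q := ⋃₀ {S | M.IsEC S}

/-- Positive always synchronizing in `T`. -/
def PosAlways (M : MDP Q A) (d0 : Q → ℝ) (T : Set Q) : Prop :=
  ∃ σ, IsStrategy σ ∧ ∀ i, 0 < mass (M.stepDist σ d0 i) T

/-- Positive eventually synchronizing in `T`. -/
def PosEvent (M : MDP Q A) (d0 : Q → ℝ) (T : Set Q) : Prop :=
  ∃ σ, IsStrategy σ ∧ ∃ i, 0 < mass (M.stepDist σ d0 i) T

/-- Positive weakly synchronizing in `T`. -/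
def PosWeakly (M : MDP Q A) (d0 : Q → ℝ) (T : Set Q) : Prop :=
  ∃ σ, IsStrategy σ ∧ ∀ N, ∃ i ≥ N, 0 < mass (M.stepDist σ d0 i) T

/-- Positive strongly synchronizing in `T`. -/
def PosStrongly (M : MDP Q A) (d0 : Q → ℝ) (T : Set Q) : Prop :=
  ∃ σ, IsStrategy σ ∧ ∃ N, ∀ i ≥ N, 0 < mass (M.stepDist σ d0 i) T

/-- Bounded always synchronizing in `T`. -/
def BndAlways (M : MDP Q A) (d0 : Q → ℝ) (T : Set Q) : Prop :=
  ∃ σ, IsStrategy σ ∧ ∃ ε > (0 : ℝ), ∀ i, ε < mass (M.stepDist σ d0 i) T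

/-- Bounded eventually synchronizing in `T`. -/
def BndEvent (M : MDP Q A) (d0 : Q → ℝ) (T : Set Q) : Prop :=
  ∃ σ, IsStrategy σ ∧ ∃ ε > (0 : ℝ), ∃ i, ε < mass (M.stepDist σ d0 i) T

/-- Bounded weakly synchronizing in `T`. -/
def BndWeakly (M : MDP Q A) (d0 : Q → ℝ) (T : Set Q) : Prop :=
  ∃ σ, IsStrategy σ ∧ ∃ ε > (0 : ℝ), ∀ N, ∃ i ≥ N, ε < mass (M.stepDist σ d0 i) T

/-- Bounded strongly synchronizing in `T`. -/
def BndStrongly (M : MDP Q A) (d0 : Q → ℝ) (T : Set Q) : Prop :=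
  ∃ σ, IsStrategy σ ∧ ∃ ε > (0 : ℝ), ∃ N, ∀ i ≥ N, ε < mass (M.stepDist σ d0 i) T

end MDP

namespace MDPAux

open MDP

variable {Q A : Type} [Fintype Q] [Fintype A]

lemma cons_mk_succ {α : Type*} {m : ℕ} (x : α) (f : Fin m → α) (k : ℕ) (h : k + 1 < m + 1) :
    (Fin.cons x f : Fin (m + 1) → α) ⟨k + 1, h⟩ = f ⟨k, by omega⟩ := by
  have : (⟨k + 1, h⟩ : Fin (m + 1)) = Fin.succ ⟨k, by omega⟩ := rfl
  rw [this, Fin.cons_succ]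

/-- Reindex a sum over paths of length `n+1` by peeling the first state/action. -/
lemma sum_paths_succ {n : ℕ} (f : (Fin (n + 2) → Q) → (Fin (n + 1) → A) → ℝ) :
    ∑ qs : Fin (n + 2) → Q, ∑ as : Fin (n + 1) → A, f qs as
      = ∑ q0 : Q, ∑ qs : Fin (n + 1) → Q, ∑ a0 : A, ∑ as : Fin n → A,
          f (Fin.cons q0 qs) (Fin.cons a0 as) := by
  rw [← Equiv.sum_comp (Fin.consEquiv (fun _ : Fin (n + 2) => Q))]
  rw [Fintype.sum_prod_type]
  refine Finset.sum_congr rfl fun q0 _ => ?_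
  refine Finset.sum_congr rfl fun qs _ => ?_
  rw [← Equiv.sum_comp (Fin.consEquiv (fun _ : Fin (n + 1) => A))]
  rw [Fintype.sum_prod_type]
  rfl

/-- Peeling the first step off a path probability. -/
lemma pathProb_cons (M : MDP Q A) (σ : List (Q × A) → Q → A → ℝ) (d0 : Q → ℝ)
    {n : ℕ} (q0 : Q) (a0 : A) (qs : Fin (n + 1) → Q) (as : Fin n → A) :
    M.pathProb σ d0 (n + 1) (Fin.cons q0 qs) (Fin.cons a0 as)
      = d0 q0 * (σ [] q0 a0 *
          M.pathProb (fun h => σ ((q0, a0) :: h)) (M.δ q0 a0) n qs as) := by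
  unfold pathProb
  rw [Fin.prod_univ_succ]
  have h0 : (Fin.cons q0 qs : Fin (n + 2) → Q) 0 = q0 := rfl
  have hterm : ∀ j : Fin n,
      (σ (List.ofFn (fun k : Fin (j.succ.val) =>
            ((Fin.cons q0 qs : Fin (n + 2) → Q) ⟨k.val, by have := k.isLt; have := j.succ.isLt; omega⟩,
             (Fin.cons a0 as : Fin (n + 1) → A) ⟨k.val, by have := k.isLt; have := j.succ.isLt; omega⟩)))
          ((Fin.cons q0 qs : Fin (n + 2) → Q) j.succ.castSucc)
          ((Fin.cons a0 as : Fin (n + 1) → A) j.succ))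
        * M.δ ((Fin.cons q0 qs : Fin (n + 2) → Q) j.succ.castSucc)
            ((Fin.cons a0 as : Fin (n + 1) → A) j.succ)
            ((Fin.cons q0 qs : Fin (n + 2) → Q) j.succ.succ)
      = (σ ((q0, a0) :: List.ofFn (fun k : Fin j.val =>
            (qs ⟨k.val, by have := k.isLt; have := j.isLt; omega⟩,
             as ⟨k.val, by have := k.isLt; have := j.isLt; omega⟩)))
          (qs j.castSucc) (as j))
        * M.δ (qs j.castSucc) (as j) (qs j.succ) := by
    intro j
    have e1 : (Fin.cons q0 qs : Fin (n + 2) → Q) j.succ.castSucc = qs j.castSucc := by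
      rw [← Fin.succ_castSucc, Fin.cons_succ]
    have e2 : (Fin.cons a0 as : Fin (n + 1) → A) j.succ = as j := Fin.cons_succ _ _ _
    have e3 : (Fin.cons q0 qs : Fin (n + 2) → Q) j.succ.succ = qs j.succ := Fin.cons_succ _ _ _
    have e4 : (List.ofFn (fun k : Fin (j.succ.val) =>
            ((Fin.cons q0 qs : Fin (n + 2) → Q) ⟨k.val, by have := k.isLt; have := j.succ.isLt; omega⟩,
             (Fin.cons a0 as : Fin (n + 1) → A) ⟨k.val, by have := k.isLt; have := j.succ.isLt; omega⟩)))
        = (q0, a0) :: List.ofFn (fun k : Fin j.val =>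
            (qs ⟨k.val, by have := k.isLt; have := j.isLt; omega⟩,
             as ⟨k.val, by have := k.isLt; have := j.isLt; omega⟩)) := by
      refine List.ext_getElem (by simp) ?_
      intro l h1 h2
      simp only [List.getElem_ofFn]
      rcases l with _ | k
      · simp [Fin.mk_zero]
      · simp only [List.getElem_cons_succ, List.getElem_ofFn]
        have hk : k < j.val := by
          simp only [List.length_ofFn, Fin.val_succ] at h1
          omega
        rw [cons_mk_succ q0 qs k (by omega), cons_mk_succ a0 as k (by omega)]
    rw [e1, e2, e3, e4]
  rw [Finset.prod_congr rfl (fun j _ => hterm j)]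
  simp only [h0]
  have hfirst : (Fin.cons q0 qs : Fin (n + 2) → Q) (0 : Fin (n + 1)).castSucc = q0 := rfl
  have hfirst2 : (Fin.cons a0 as : Fin (n + 1) → A) 0 = a0 := rfl
  have hfirst3 : (Fin.cons q0 qs : Fin (n + 2) → Q) (0 : Fin (n + 1)).succ = qs 0 := by
    have : ((0 : Fin (n + 1)).succ : Fin (n + 2)) = Fin.succ 0 := rfl
    rw [this, Fin.cons_succ]
  rw [hfirst, hfirst2, hfirst3]
  simp only [Fin.val_zero, List.ofFn_zero]
  ring

lemma pathProb_nonneg (M : MDP Q A) {σ : List (Q × A) → Q → A → ℝ} (hσ : IsStrategy σ)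
    {d0 : Q → ℝ} (hd : ∀ q, 0 ≤ d0 q) (i : ℕ) (qs : Fin (i + 1) → Q) (as : Fin i → A) :
    0 ≤ M.pathProb σ d0 i qs as := by
  unfold pathProb
  refine mul_nonneg (hd _) (Finset.prod_nonneg fun j _ => mul_nonneg (hσ.1 _ _ _) (M.δ_nonneg _ _ _))

/-- The equivalence between `Q` and length-one paths. -/
def constEquiv (Q : Type) : Q ≃ (Fin 1 → Q) :=
  ⟨fun q _ => q, fun f => f 0, fun _ => rfl,
    fun f => funext fun j => congrArg f (Subsingleton.elim 0 j)⟩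

/-- The shifted strategy after seeing `(q0, a0)` is still a strategy. -/
lemma isStrategy_shift {σ : List (Q × A) → Q → A → ℝ} (hσ : IsStrategy σ) (q0 : Q) (a0 : A) :
    IsStrategy (fun h => σ ((q0, a0) :: h)) :=
  ⟨fun h q a => hσ.1 _ q a, fun h q => hσ.2 _ q⟩

/-- Total probability of all paths of length `n`. -/
lemma sum_pathProb (M : MDP Q A) :
    ∀ (n : ℕ) (σ : List (Q × A) → Q → A → ℝ), IsStrategy σ → ∀ d0 : Q → ℝ,
      (∑ qs : Fin (n + 1) → Q, ∑ as : Fin n → A, M.pathProb σ d0 n qs as) = ∑ q, d0 q := by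
  intro n
  induction n with
  | zero =>
    intro σ hσ d0
    unfold pathProb
    rw [← Equiv.sum_comp (Equiv.funUnique (Fin 1) Q).symm]
    simp
  | succ n ih =>
    intro σ hσ d0
    rw [sum_paths_succ]
    have key : ∀ q0 : Q, (∑ qs : Fin (n + 1) → Q, ∑ a0 : A, ∑ as : Fin n → A,
        M.pathProb σ d0 (n + 1) (Fin.cons q0 qs) (Fin.cons a0 as)) = d0 q0 := by
      intro q0
      rw [Finset.sum_comm]
      have inner : ∀ a0 : A, (∑ qs : Fin (n + 1) → Q, ∑ as : Fin n → A,
          M.pathProb σ d0 (n + 1) (Fin.cons q0 qs) (Fin.cons a0 as))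
          = d0 q0 * σ [] q0 a0 := by
        intro a0
        simp only [pathProb_cons, ← Finset.mul_sum]
        rw [ih _ (isStrategy_shift hσ q0 a0) (M.δ q0 a0), M.δ_sum q0 a0]
        ring
      simp only [inner, ← Finset.mul_sum, hσ.2 [] q0, mul_one]
    simp only [key]

/-- Probability of paths staying outside the `Pre`-iterates of `U`. -/
noncomputable def badF (M : MDP Q A) (σ : List (Q × A) → Q → A → ℝ)
    (d0 : Q → ℝ) (U : Set Q) (n : ℕ) : ℝ :=
  ∑ qs : Fin (n + 1) → Q, ∑ as : Fin n → A,
    if ∀ j : Fin (n + 1), qs j ∉ (M.Pre)^[n - j.val] U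
      then M.pathProb σ d0 n qs as else 0

lemma badF_nonneg (M : MDP Q A) {σ : List (Q × A) → Q → A → ℝ} (hσ : IsStrategy σ)
    {d0 : Q → ℝ} (hd : ∀ q, 0 ≤ d0 q) (U : Set Q) (n : ℕ) :
    0 ≤ badF M σ d0 U n := by
  refine Finset.sum_nonneg fun qs _ => Finset.sum_nonneg fun as _ => ?_
  split
  · exact pathProb_nonneg M hσ hd n qs as
  · exact le_rfl

lemma badF_ge (M : MDP Q A) {α : ℝ}
    (hα : IsLeast {x : ℝ | 0 < x ∧ ∃ q a q', M.δ q a q' = x} α) (U : Set Q) :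
    ∀ (n : ℕ) (σ : List (Q × A) → Q → A → ℝ), IsStrategy σ →
      ∀ d0 : Q → ℝ, (∀ q, 0 ≤ d0 q) →
      α ^ n * ∑ q, (((M.Pre)^[n] U)ᶜ).indicator d0 q ≤ badF M σ d0 U n := by
  have hαpos : 0 < α := hα.1.1
  intro n
  induction n with
  | zero =>
    intro σ hσ d0 hd
    rw [pow_zero, one_mul]
    unfold badF pathProb
    rw [← Equiv.sum_comp (constEquiv Q)]
    refine le_of_eq (Finset.sum_congr rfl fun q _ => ?_)
    rw [Fintype.sum_unique]
    have he : ∀ j : Fin 1, constEquiv Q q j = q := fun _ => rfl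
    simp only [Finset.univ_eq_empty, Finset.prod_empty, mul_one, he]
    rw [Set.indicator_apply]
    by_cases hq : q ∈ U
    · rw [if_neg (by simpa using hq), if_neg (fun hc => (hc 0) hq)]
    · rw [if_pos (by simpa using hq), if_pos (fun j => by
        have h0 : (0 : ℕ) - j.val = 0 := by omega
        rw [h0]
        simpa using hq)]
  | succ n ih =>
    intro σ hσ d0 hd
    unfold badF
    rw [sum_paths_succ]
    have hcond : ∀ (q0 : Q) (qs : Fin (n + 1) → Q),
        (∀ j : Fin (n + 2), (Fin.cons q0 qs : Fin (n + 2) → Q) j ∉ (M.Pre)^[n + 1 - j.val] U)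
          ↔ (q0 ∉ (M.Pre)^[n + 1] U ∧ ∀ j : Fin (n + 1), qs j ∉ (M.Pre)^[n - j.val] U) := by
      intro q0 qs
      rw [Fin.forall_fin_succ]
      constructor
      · rintro ⟨h0, hs⟩
        refine ⟨h0, fun j => ?_⟩
        have := hs j
        rwa [Fin.cons_succ, Fin.val_succ, Nat.succ_sub_succ] at this
      · rintro ⟨h0, hs⟩
        refine ⟨h0, fun j => ?_⟩
        rw [Fin.cons_succ, Fin.val_succ, Nat.succ_sub_succ]
        exact hs j
    have hterm : ∀ (q0 : Q) (qs : Fin (n + 1) → Q) (a0 : A) (as : Fin n → A),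
        (if ∀ j : Fin (n + 2), (Fin.cons q0 qs : Fin (n + 2) → Q) j ∉ (M.Pre)^[n + 1 - j.val] U
          then M.pathProb σ d0 (n + 1) (Fin.cons q0 qs) (Fin.cons a0 as) else 0)
        = (if q0 ∉ (M.Pre)^[n + 1] U then d0 q0 else 0) * (σ [] q0 a0 *
            (if ∀ j : Fin (n + 1), qs j ∉ (M.Pre)^[n - j.val] U
              then M.pathProb (fun h => σ ((q0, a0) :: h)) (M.δ q0 a0) n qs as else 0)) := by
      intro q0 qs a0 as
      by_cases h0 : q0 ∉ (M.Pre)^[n + 1] U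
      · by_cases htail : ∀ j : Fin (n + 1), qs j ∉ (M.Pre)^[n - j.val] U
        · rw [if_pos ((hcond q0 qs).mpr ⟨h0, htail⟩), if_pos htail, if_pos h0, pathProb_cons]
        · rw [if_neg (fun hc => htail ((hcond q0 qs).mp hc).2), if_neg htail]
          ring
      · rw [if_neg (fun hc => h0 ((hcond q0 qs).mp hc).1), if_neg h0]
        ring
    simp only [hterm, ← Finset.mul_sum]
    rw [Finset.mul_sum]
    refine Finset.sum_le_sum fun q0 _ => ?_
    by_cases h0 : q0 ∉ (M.Pre)^[n + 1] U
    · rw [if_pos h0, Set.indicator_of_mem (Set.mem_compl h0) d0, Finset.sum_comm]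
      have hnot : ∀ a0 : A, ∃ q', 0 < M.δ q0 a0 q' ∧ q' ∉ (M.Pre)^[n] U := by
        rw [Function.iterate_succ_apply'] at h0
        intro a0
        by_contra hcon
        push_neg at hcon
        exact h0 ⟨a0, hcon⟩
      have hbound : ∀ a0 : A,
          α ^ (n + 1) ≤ badF M (fun h => σ ((q0, a0) :: h)) (M.δ q0 a0) U n := by
        intro a0
        obtain ⟨q', hpos, hout⟩ := hnot a0
        have h1 : α ≤ ∑ q, (((M.Pre)^[n] U)ᶜ).indicator (M.δ q0 a0) q := by
          have h2 : α ≤ (((M.Pre)^[n] U)ᶜ).indicator (M.δ q0 a0) q' := by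
            rw [Set.indicator_of_mem (Set.mem_compl hout)]
            exact hα.2 ⟨hpos, q0, a0, q', rfl⟩
          refine h2.trans (Finset.single_le_sum
            (f := fun q => (((M.Pre)^[n] U)ᶜ).indicator (M.δ q0 a0) q)
            (fun q _ => Set.indicator_nonneg (fun x _ => M.δ_nonneg q0 a0 x) q)
            (Finset.mem_univ q'))
        calc α ^ (n + 1) = α ^ n * α := by ring
          _ ≤ α ^ n * ∑ q, (((M.Pre)^[n] U)ᶜ).indicator (M.δ q0 a0) q :=
              mul_le_mul_of_nonneg_left h1 (pow_nonneg hαpos.le n)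
          _ ≤ _ := ih _ (isStrategy_shift hσ q0 a0) _ (fun q => M.δ_nonneg q0 a0 q)
      have hsum : ∀ a0 : A,
          (∑ qs : Fin (n + 1) → Q, σ [] q0 a0 * ∑ as : Fin n → A,
            if ∀ j : Fin (n + 1), qs j ∉ (M.Pre)^[n - j.val] U
              then M.pathProb (fun h => σ ((q0, a0) :: h)) (M.δ q0 a0) n qs as else 0)
          = σ [] q0 a0 * badF M (fun h => σ ((q0, a0) :: h)) (M.δ q0 a0) U n := by
        intro a0
        rw [← Finset.mul_sum]
        rfl
      simp only [hsum]
      have hone : (∑ a0, σ [] q0 a0 * α ^ (n + 1)) = α ^ (n + 1) := by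
        rw [← Finset.sum_mul, hσ.2 [] q0, one_mul]
      calc α ^ (n + 1) * d0 q0
          = d0 q0 * ∑ a0, σ [] q0 a0 * α ^ (n + 1) := by rw [hone]; ring
        _ ≤ d0 q0 * ∑ a0, σ [] q0 a0 *
              badF M (fun h => σ ((q0, a0) :: h)) (M.δ q0 a0) U n := by
            refine mul_le_mul_of_nonneg_left (Finset.sum_le_sum fun a0 _ =>
              mul_le_mul_of_nonneg_left (hbound a0) (hσ.1 [] q0 a0)) (hd q0)
    · rw [if_neg h0, Set.indicator_of_notMem (by simpa using h0)]
      simp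

lemma mass_stepDist (M : MDP Q A) (σ : List (Q × A) → Q → A → ℝ) (d0 : Q → ℝ)
    (i : ℕ) (S : Set Q) :
    mass (M.stepDist σ d0 i) S = ∑ qs : Fin (i + 1) → Q, ∑ as : Fin i → A,
      if qs (Fin.last i) ∈ S then M.pathProb σ d0 i qs as else 0 := by
  unfold mass stepDist
  simp only [Set.indicator_apply]
  have hpush : ∀ q : Q,
      (if q ∈ S then ∑ qs : Fin (i + 1) → Q, ∑ as : Fin i → A,
          (if qs (Fin.last i) = q then M.pathProb σ d0 i qs as else 0) else 0)
      = ∑ qs : Fin (i + 1) → Q, ∑ as : Fin i → A,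
          (if q ∈ S then (if qs (Fin.last i) = q then M.pathProb σ d0 i qs as else 0)
            else 0) := by
    intro q
    by_cases hq : q ∈ S
    · simp [hq]
    · simp [hq]
  simp only [hpush]
  rw [Finset.sum_comm]
  refine Finset.sum_congr rfl fun qs _ => ?_
  rw [Finset.sum_comm]
  refine Finset.sum_congr rfl fun as _ => ?_
  by_cases hS : qs (Fin.last i) ∈ S
  · rw [if_pos hS, Finset.sum_eq_single (qs (Fin.last i))]
    · rw [if_pos hS, if_pos rfl]
    · intro q _ hne
      by_cases hq : q ∈ S
      · rw [if_pos hq, if_neg (fun he => hne he.symm)]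
      · rw [if_neg hq]
    · intro habs
      exact absurd (Finset.mem_univ _) habs
  · rw [if_neg hS]
    refine Finset.sum_eq_zero fun q _ => ?_
    by_cases hq : q ∈ S
    · rw [if_pos hq, if_neg (fun he => hS (by rw [he]; exact hq))]
    · rw [if_neg hq]

lemma mass_compl (M : MDP Q A) {σ : List (Q × A) → Q → A → ℝ} (hσ : IsStrategy σ)
    {d0 : Q → ℝ} (hd0 : IsDist d0) (i : ℕ) (T : Set Q) :
    mass (M.stepDist σ d0 i) T + mass (M.stepDist σ d0 i) Tᶜ = 1 := by
  rw [mass_stepDist, mass_stepDist, ← Finset.sum_add_distrib]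
  simp only [← Finset.sum_add_distrib]
  refine Eq.trans (b := ∑ qs : Fin (i + 1) → Q, ∑ as : Fin i → A, M.pathProb σ d0 i qs as)
    (Finset.sum_congr rfl fun qs _ => Finset.sum_congr rfl fun as _ => ?_)
    (by rw [sum_pathProb M i σ hσ d0, hd0.2])
  by_cases hT : qs (Fin.last i) ∈ T
  · simp [hT]
  · simp [hT]

lemma badF_le_mass (M : MDP Q A) {σ : List (Q × A) → Q → A → ℝ} (hσ : IsStrategy σ)
    {d0 : Q → ℝ} (hd : ∀ q, 0 ≤ d0 q) (T : Set Q) (i : ℕ) :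
    badF M σ d0 T i ≤ mass (M.stepDist σ d0 i) Tᶜ := by
  rw [mass_stepDist]
  unfold badF
  refine Finset.sum_le_sum fun qs _ => Finset.sum_le_sum fun as _ => ?_
  by_cases hc : ∀ j : Fin (i + 1), qs j ∉ (M.Pre)^[i - j.val] T
  · rw [if_pos hc, if_pos]
    have hlast := hc (Fin.last i)
    rwa [show i - (Fin.last i).val = 0 from by simp, Function.iterate_zero_apply] at hlast
  · rw [if_neg hc]
    split
    · exact pathProb_nonneg M hσ hd i qs as
    · exact le_rfl

end MDPAux

open MDP in
/-- If there is no `k` with `Supp(d0) ⊆ Pre^k(T)` (i.e. `d0` is not sure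
eventually synchronizing in `T`), then `M^σ_i(T) ≤ 1 - α0 * α ^ i` for all `σ, i`. -/
theorem stmt1 {Q A : Type} [Fintype Q] [Fintype A] (M : MDP Q A)
    (d0 : Q → ℝ) (hd0 : IsDist d0) (T : Set Q) (α α0 : ℝ)
    (hα : IsLeast {x : ℝ | 0 < x ∧ ∃ q a q', M.δ q a q' = x} α)
    (hα0 : IsLeast {x : ℝ | 0 < x ∧ ∃ q, d0 q = x} α0)
    (h : ¬ ∃ k : ℕ, supp d0 ⊆ (M.Pre)^[k] T) :
    ∀ σ, IsStrategy σ → ∀ i : ℕ,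
      mass (M.stepDist σ d0 i) T ≤ 1 - α0 * α ^ i := by
  intro σ hσ i
  push_neg at h
  obtain ⟨q, hqs, hqn⟩ := Set.not_subset.mp (h i)
  have hq0 : (0 : ℝ) < d0 q := hqs
  have hα0q : α0 ≤ d0 q := hα0.2 ⟨hq0, q, rfl⟩
  have hind : d0 q ≤ ∑ x, (((M.Pre)^[i] T)ᶜ).indicator d0 x := by
    have he : d0 q = (((M.Pre)^[i] T)ᶜ).indicator d0 q :=
      (Set.indicator_of_mem (Set.mem_compl hqn) d0).symm
    rw [he]
    exact Finset.single_le_sum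
      (fun x _ => Set.indicator_nonneg (fun y _ => hd0.1 y) x) (Finset.mem_univ q)
  have h1 : α0 * α ^ i ≤ MDPAux.badF M σ d0 T i := by
    calc α0 * α ^ i = α ^ i * α0 := by ring
      _ ≤ α ^ i * ∑ x, (((M.Pre)^[i] T)ᶜ).indicator d0 x :=
          mul_le_mul_of_nonneg_left (hα0q.trans hind) (pow_nonneg hα.1.1.le i)
      _ ≤ MDPAux.badF M σ d0 T i := MDPAux.badF_ge M hα T i σ hσ d0 hd0.1
  have h2 := MDPAux.badF_le_mass M hσ hd0.1 T i
  have h3 := MDPAux.mass_compl M hσ hd0 i T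
  linarith
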